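/- arXiv:1707.03563 — 2 statements merged into one kernel-verified Lean document; each statement's English description precedes it below -/
import Mathlib

section
/- For a finite set L and nonnegative integer c, the set of (L,c)-codewords equipped with the domination order is a well-quasi-ordering. -/
/-- An `(L,c)`-codeword: a positive length `n`, labels `lab : [1,n] → L`,
and gaps `gap : [1,n-1] → {0,…,c}` (values outside the range are irrelevant). -/
structure Codeword (L : Type) (c : ℕ) where
  n : ℕ
  pos : 0 < n
  lab : ℕ → L
  gap : ℕ → ℕ
  gap_le : ∀ i, gap i ≤ c

/-- `f` certifies that `w` is dominated by `w'`. -/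
def DominatesVia {L : Type} {c : ℕ} (f : ℕ → ℕ) (w w' : Codeword L c) : Prop :=
  (∀ j, 1 ≤ j → j ≤ w.n → 1 ≤ f j ∧ f j ≤ w'.n) ∧
  (∀ j j', 1 ≤ j → j < j' → j' ≤ w.n → f j < f j') ∧
  (∀ j, 1 ≤ j → j ≤ w.n → w.lab j = w'.lab (f j)) ∧
  (∀ j, 1 ≤ j → j + 1 ≤ w.n → ∀ i, f j ≤ i → i ≤ f (j + 1) - 1 → w.gap j ≤ w'.gap i)

/-- The domination order on `(L,c)`-codewords. -/
def Dominates {L : Type} {c : ℕ} (w w' : Codeword L c) : Prop :=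
  ∃ f, DominatesVia f w w'

section Machinery

variable {L : Type}

/-! ### Nested list levels and the iterated Higman order -/

def Lvl (L : Type) : ℕ → Type
  | 0 => List L
  | k+1 => List (Lvl L k)

def Rk (L : Type) : ∀ k, Lvl L k → Lvl L k → Prop
  | 0 => List.SublistForall₂ Eq
  | k+1 => List.SublistForall₂ (Rk L k)

lemma wqoRk (L : Type) [Finite L] : ∀ k,
    IsRefl (Lvl L k) (Rk L k) ∧ IsTrans (Lvl L k) (Rk L k) ∧
    (Set.univ : Set (Lvl L k)).PartiallyWellOrderedOn (Rk L k) := by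
  intro k
  induction k with
  | zero =>
    refine ⟨List.SublistForall₂.is_refl, List.SublistForall₂.is_trans, ?_⟩
    have hL : (Set.univ : Set L).PartiallyWellOrderedOn Eq := by
      refine Set.partiallyWellOrderedOn_iff_exists_lt.2 fun f _ => ?_
      obtain ⟨i, j, hij, h⟩ := Finite.exists_ne_map_eq_of_infinite f
      rcases hij.lt_or_gt with h' | h'
      · exact ⟨i, j, h', h⟩
      · exact ⟨j, i, h', h.symm⟩
    have := hL.partiallyWellOrderedOn_sublistForall₂ (r := Eq)
    suffices e : ({l | ∀ x, x ∈ l → x ∈ Set.univ} : Set (List L)) = Set.univ by rw [e] at this; exact this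
    ext l; simp
  | succ k ih =>
    obtain ⟨h1, h2, h3⟩ := ih
    refine ⟨@List.SublistForall₂.is_refl _ _ h1, @List.SublistForall₂.is_trans _ _ h2, ?_⟩
    haveI := h1; haveI := h2; haveI : IsPreorder (Lvl L k) (Rk L k) := {}
    have := Set.PartiallyWellOrderedOn.partiallyWellOrderedOn_sublistForall₂ (Rk L k) h3
    suffices e : ({l | ∀ x, x ∈ l → x ∈ Set.univ} : Set (List (Lvl L k))) = Set.univ by rw [e] at this; exact this
    ext l; simp

/-! ### Gapped words, blocks, and the gap-embedding relation -/

/-- Decrement all gap values by one. -/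
def decr (l : List (L × ℕ)) : List (L × ℕ) := l.map (fun p => (p.1, p.2 - 1))

/-- Split a gapped word into blocks ending at gap-0 positions. -/
def splitGap : List (L × ℕ) → List (List (L × ℕ))
  | [] => []
  | p :: t =>
    if p.2 = 0 then [p] :: splitGap t
    else
      match splitGap t with
      | [] => [[p]]
      | b :: bs => (p :: b) :: bs

/-- The last entry (if any) has gap 0. -/
def LastZero (l : List (L × ℕ)) : Prop := ∀ p ∈ l.getLast?, p.2 = 0

/-- The nested-list encoding at level `k`. -/
def Ek : ∀ k : ℕ, List (L × ℕ) → Lvl L k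
  | 0, l => (l.map Prod.fst : List L)
  | k+1, l => ((splitGap l).map (fun b => Ek k (decr b)) : List (Lvl L k))

/-- Gap-embedding: `EmbF g u v` means `u` embeds into `v`, where any skipped
prefix entries of `v` must have gap at least `g`, and after matching an entry
of `u` with gap `h`, entries of `v` from the match on (until the next match)
must have gap at least `h`. -/
inductive EmbF : ℕ → List (L × ℕ) → List (L × ℕ) → Prop
  | nil : ∀ g v, EmbF g [] v
  | match' : ∀ g a h h' u v, h ≤ h' → EmbF h u v → EmbF g ((a,h) :: u) ((a,h') :: v)
  | skip : ∀ g p u v, g ≤ p.2 → EmbF g u v → EmbF g u (p :: v)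

lemma EmbF.not_cons_nil {g : ℕ} {p : L × ℕ} {u : List (L × ℕ)}
    (h : EmbF g (p :: u) []) : False := by cases h

lemma EmbF.ne_nil {g : ℕ} {u v : List (L × ℕ)} (h : EmbF g u v) (hu : u ≠ []) : v ≠ [] := by
  rintro rfl
  cases u with
  | nil => exact hu rfl
  | cons p t => exact h.not_cons_nil

/-- Prepending to the target preserves bound-0 embeddings. -/
lemma EmbF.prepend {u v : List (L × ℕ)} (w : List (L × ℕ)) (h : EmbF 0 u v) :
    EmbF 0 u (w ++ v) := by
  induction w with
  | nil => exact h
  | cons p t ih => exact EmbF.skip 0 p u (t ++ v) (Nat.zero_le _) ih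

lemma lastZero_cons_nil {p : L × ℕ} (h : LastZero [p]) : p.2 = 0 := by
  have := h p; simp [List.getLast?] at this; exact this

lemma lastZero_cons {p : L × ℕ} {t : List (L × ℕ)} (h : LastZero (p :: t)) :
    LastZero t := by
  intro q hq
  exact h q (List.mem_getLast?_cons hq)

/-- Gluing embeddings along concatenation, when the first piece ends in gap 0. -/
lemma EmbF.append {g : ℕ} {u v u' v' : List (L × ℕ)} (hu : u ≠ []) (hz : LastZero u)
    (h1 : EmbF g u v) (h2 : EmbF 0 u' v') : EmbF g (u ++ u') (v ++ v') := by
  induction h1 with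
  | nil => exact absurd rfl hu
  | match' g a h h' u₀ v₀ hle hE ih =>
    rcases eq_or_ne u₀ [] with rfl | hne
    · have hh : h = 0 := lastZero_cons_nil hz
      subst hh
      exact EmbF.match' g a 0 h' u' (v₀ ++ v') hle (h2.prepend v₀)
    · exact EmbF.match' g a h h' (u₀ ++ u') (v₀ ++ v') hle (ih hne (lastZero_cons hz))
  | skip g p u₀ v₀ hgp hE ih =>
    exact EmbF.skip g p (u₀ ++ u') (v₀ ++ v') hgp (ih hu hz)

/-- Gluing a Higman-embedded sequence of blocks. -/
lemma EmbF.joinBlocks {bs bs' : List (List (L × ℕ))}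
    (hb : ∀ b ∈ bs, b ≠ [] ∧ LastZero b)
    (h : List.SublistForall₂ (EmbF 0) bs bs') :
    EmbF 0 bs.flatten bs'.flatten := by
  induction h with
  | nil => exact EmbF.nil 0 _
  | cons hab hrest ih =>
    rename_i a b l₁ l₂
    have ha := hb a (by simp)
    simp only [List.flatten_cons]
    exact EmbF.append ha.1 ha.2 hab (ih (fun x hx => hb x (by simp [hx])))
  | cons_right h ih =>
    rename_i b l₁ l₂
    simp only [List.flatten_cons]
    exact (ih hb).prepend b

/-! ### Properties of `splitGap` -/

lemma splitGap_flatten : ∀ u : List (L × ℕ), (splitGap u).flatten = u := by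
  intro u
  induction u with
  | nil => rfl
  | cons p t ih =>
    rw [splitGap]
    split
    · simp [ih]
    · rcases h : splitGap t with _ | ⟨b, bs⟩
      · simp [h] at ih; simp [ih]
      · rw [h] at ih; simp at ih ⊢; exact ih

lemma splitGap_eq_nil_iff {u : List (L × ℕ)} : splitGap u = [] ↔ u = [] := by
  constructor
  · intro h
    have := splitGap_flatten u
    rw [h] at this
    simpa using this.symm
  · rintro rfl; rfl

lemma getLast?_cons_ne_nil {p : L × ℕ} {t : List (L × ℕ)} (ht : t ≠ []) :
    (p :: t).getLast? = t.getLast? := by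
  cases t with
  | nil => exact absurd rfl ht
  | cons a t' => exact List.getLast?_cons_cons ..

lemma splitGap_blocks : ∀ u : List (L × ℕ), LastZero u →
    ∀ b ∈ splitGap u, b ≠ [] ∧ (∀ p ∈ b.dropLast, p.2 ≠ 0) ∧ LastZero b ∧ (∀ p ∈ b, p ∈ u) := by
  intro u
  induction u with
  | nil => intro _ b hb; simp [splitGap] at hb
  | cons p t ih =>
    intro hz b hb
    rw [splitGap] at hb
    by_cases hp : p.2 = 0
    · rw [if_pos hp] at hb
      rcases List.mem_cons.1 hb with rfl | hb'
      · refine ⟨by simp, by simp, ?_, by simp⟩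
        intro q hq; simp [List.getLast?] at hq; subst hq; exact hp
      · rcases eq_or_ne t [] with rfl | ht
        · simp [splitGap] at hb'
        · obtain ⟨h1, h2, h3, h4⟩ := ih (lastZero_cons hz) b hb'
          exact ⟨h1, h2, h3, fun q hq => List.mem_cons_of_mem _ (h4 q hq)⟩
    · rw [if_neg hp] at hb
      rcases eq_or_ne t [] with rfl | ht
      · exact absurd (hz p (by simp)) hp
      rcases h : splitGap t with _ | ⟨b₀, bs⟩
      · exact absurd (splitGap_eq_nil_iff.1 h) ht
      rw [h] at hb
      rcases List.mem_cons.1 hb with rfl | hb'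
      · obtain ⟨h1, h2, h3, h4⟩ := ih (lastZero_cons hz) b₀ (h ▸ List.mem_cons_self)
        refine ⟨by simp, ?_, ?_, ?_⟩
        · intro q hq
          rw [List.dropLast_cons_of_ne_nil h1] at hq
          rcases List.mem_cons.1 hq with rfl | hq'
          · exact hp
          · exact h2 q hq'
        · intro q hq
          exact h3 q (by rwa [getLast?_cons_ne_nil h1] at hq)
        · intro q hq
          rcases List.mem_cons.1 hq with rfl | hq'
          · exact List.mem_cons_self
          · exact List.mem_cons_of_mem _ (h4 q hq')
      · obtain ⟨h1, h2, h3, h4⟩ := ih (lastZero_cons hz) b (h ▸ List.mem_cons_of_mem _ hb')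
        exact ⟨h1, h2, h3, fun q hq => List.mem_cons_of_mem _ (h4 q hq)⟩

/-! ### Lifting embeddings over decrement -/

lemma EmbF.cons_cons_inv {g : ℕ} {p q : L × ℕ} {u v : List (L × ℕ)}
    (h : EmbF g (p :: u) (q :: v)) :
    (p.1 = q.1 ∧ p.2 ≤ q.2 ∧ EmbF p.2 u v) ∨ (g ≤ q.2 ∧ EmbF g (p :: u) v) := by
  cases h with
  | match' _ a hh hh' _ _ hle hE => exact Or.inl ⟨rfl, hle, hE⟩
  | skip _ _ _ _ hgp hE => exact Or.inr ⟨hgp, hE⟩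

lemma decr_cons (p : L × ℕ) (t : List (L × ℕ)) :
    decr (p :: t) = (p.1, p.2 - 1) :: decr t := rfl

lemma dropLast_tail_prop {P : L × ℕ → Prop} {p : L × ℕ} {t : List (L × ℕ)}
    (h : ∀ q ∈ (p :: t).dropLast, P q) : ∀ q ∈ t.dropLast, P q := by
  intro q hq
  rcases eq_or_ne t [] with rfl | ht
  · simp at hq
  · rw [List.dropLast_cons_of_ne_nil ht] at h
    exact h q (List.mem_cons_of_mem _ hq)

lemma dropLast_head_prop {P : L × ℕ → Prop} {p : L × ℕ} {t : List (L × ℕ)} (ht : t ≠ [])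
    (h : ∀ q ∈ (p :: t).dropLast, P q) : P p := by
  rw [List.dropLast_cons_of_ne_nil ht] at h
  exact h p List.mem_cons_self

lemma lift : ∀ (v u : List (L × ℕ)) (h : ℕ),
    (∀ p ∈ u.dropLast, p.2 ≠ 0) → LastZero u →
    (∀ p ∈ v.dropLast, p.2 ≠ 0) → LastZero v →
    EmbF (h - 1) (decr u) (decr v) → EmbF h u v := by
  intro v
  induction v with
  | nil =>
    intro u h _ _ _ _ hE
    cases u with
    | nil => exact EmbF.nil h []
    | cons p t => rw [decr_cons] at hE; exact absurd hE.not_cons_nil (by simp [decr])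
  | cons q v₁ ih =>
    intro u h hu1 hu2 hv1 hv2 hE
    cases u with
    | nil => exact EmbF.nil h _
    | cons p u₁ =>
      rw [decr_cons, decr_cons] at hE
      rcases hE.cons_cons_inv with ⟨hlab, hle, hE'⟩ | ⟨hle, hE'⟩
      · -- matched head
        rcases eq_or_ne u₁ [] with rfl | hne
        · have hp0 : p.2 = 0 := lastZero_cons_nil hu2
          have : EmbF p.2 ([] : List (L × ℕ)) v₁ := EmbF.nil _ _
          obtain ⟨p1, p2⟩ := p; obtain ⟨q1, q2⟩ := q
          simp only at hlab hp0
          subst hlab hp0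
          exact EmbF.match' h p1 0 q2 [] v₁ (Nat.zero_le _) (EmbF.nil _ _)
        · have hrec : EmbF p.2 u₁ v₁ :=
            ih u₁ p.2 (dropLast_tail_prop hu1) (lastZero_cons hu2)
              (dropLast_tail_prop hv1) (lastZero_cons hv2) hE'
          have hv₁ne : v₁ ≠ [] := hrec.ne_nil hne
          have hp1 : p.2 ≠ 0 := dropLast_head_prop hne hu1
          have hq1 : q.2 ≠ 0 := dropLast_head_prop hv₁ne hv1
          have hpq : p.2 ≤ q.2 := by omega
          obtain ⟨p1, p2⟩ := p; obtain ⟨q1, q2⟩ := q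
          simp only at hlab
          subst hlab
          exact EmbF.match' h p1 p2 q2 u₁ v₁ hpq hrec
      · -- skipped head of v
        have hrec : EmbF h (p :: u₁) v₁ :=
          ih (p :: u₁) h hu1 hu2 (dropLast_tail_prop hv1) (lastZero_cons hv2) hE'
        have hv₁ne : v₁ ≠ [] := hrec.ne_nil (by simp)
        have hq1 : q.2 ≠ 0 := dropLast_head_prop hv₁ne hv1
        have : h ≤ q.2 := by omega
        exact EmbF.skip h q (p :: u₁) v₁ this hrec

/-! ### Level-0 correctness -/

lemma emb_zero : ∀ (v u : List (L × ℕ)), (∀ p ∈ u, p.2 = 0) →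
    List.SublistForall₂ Eq (u.map Prod.fst) (v.map Prod.fst) → EmbF 0 u v := by
  intro v
  induction v with
  | nil =>
    intro u hu h
    cases u with
    | nil => exact EmbF.nil 0 []
    | cons p t => rw [List.map_cons] at h; cases h
  | cons q v₁ ih =>
    intro u hu h
    cases u with
    | nil => exact EmbF.nil 0 _
    | cons p u₁ =>
      rw [List.map_cons, List.map_cons] at h
      cases h with
      | cons hab hrest =>
        have hp0 : p.2 = 0 := hu p (by simp)
        have hrec : EmbF 0 u₁ v₁ := ih u₁ (fun x hx => hu x (by simp [hx])) hrest
        obtain ⟨p1, p2⟩ := p; obtain ⟨q1, q2⟩ := q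
        simp only at hab hp0
        subst hab hp0
        exact EmbF.match' 0 p1 0 q2 u₁ v₁ (Nat.zero_le _) hrec
      | cons_right h' =>
        exact EmbF.skip 0 q _ v₁ (Nat.zero_le _) (ih (p :: u₁) hu h')

/-! ### SublistForall₂ helper lemmas -/

lemma sublistForall₂_of_map {α β : Type*} {r : β → β → Prop} {f : α → β} :
    ∀ {m₁ m₂ : List β}, List.SublistForall₂ r m₁ m₂ →
    ∀ {l₁ l₂ : List α}, m₁ = l₁.map f → m₂ = l₂.map f →
    List.SublistForall₂ (fun a b => r (f a) (f b)) l₁ l₂ := by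
  intro m₁ m₂ h
  induction h with
  | nil =>
    intro l₁ l₂ h1 h2
    cases l₁ with
    | nil => exact List.SublistForall₂.nil
    | cons a t => simp at h1
  | cons hab hrest ih =>
    intro l₁ l₂ h1 h2
    cases l₁ with
    | nil => simp at h1
    | cons a t₁ =>
      cases l₂ with
      | nil => simp at h2
      | cons b t₂ =>
        rw [List.map_cons] at h1 h2
        injection h1 with e1 e1'
        injection h2 with e2 e2'
        exact List.SublistForall₂.cons (e1 ▸ e2 ▸ hab) (ih e1' e2')
  | cons_right h' ih =>
    intro l₁ l₂ h1 h2
    cases l₂ with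
    | nil => simp at h2
    | cons b t₂ =>
      rw [List.map_cons] at h2
      injection h2 with e2 e2'
      exact List.SublistForall₂.cons_right (ih h1 e2')

lemma sublistForall₂_mono_mem {α : Type*} {r r' : α → α → Prop} :
    ∀ {l₁ l₂ : List α}, List.SublistForall₂ r l₁ l₂ →
    (∀ a ∈ l₁, ∀ b ∈ l₂, r a b → r' a b) → List.SublistForall₂ r' l₁ l₂ := by
  intro l₁ l₂ h
  induction h with
  | nil => intro _; exact List.SublistForall₂.nil
  | cons hab hrest ih =>
    rename_i a b t₁ t₂
    intro hm
    exact List.SublistForall₂.cons (hm a (by simp) b (by simp) hab)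
      (ih (fun x hx y hy => hm x (by simp [hx]) y (by simp [hy])))
  | cons_right h' ih =>
    rename_i b t₁ t₂
    intro hm
    exact List.SublistForall₂.cons_right
      (ih (fun x hx y hy => hm x hx y (by simp [hy])))

lemma lastZero_decr {b : List (L × ℕ)} (h : LastZero b) : LastZero (decr b) := by
  intro p hp
  rw [decr, List.getLast?_map] at hp
  cases hb : b.getLast? with
  | none => simp [hb] at hp
  | some q =>
    simp [hb] at hp
    have := h q (by simp [hb])
    subst hp
    simp
    omega

/-! ### Main correctness: the encoding order implies gap-embedding -/

lemma main_correct : ∀ k (u v : List (L × ℕ)),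
    (∀ p ∈ u, p.2 ≤ k) → LastZero u → LastZero v →
    Rk L k (Ek k u) (Ek k v) → EmbF 0 u v := by
  intro k
  induction k with
  | zero =>
    intro u v hu hz hz' hR
    have hR' : List.SublistForall₂ Eq (u.map Prod.fst) (v.map Prod.fst) := hR
    exact emb_zero v u (fun p hp => Nat.le_zero.1 (hu p hp)) hR'
  | succ k ih =>
    intro u v hu hz hz' hR
    have hR' : List.SublistForall₂ (Rk L k)
        ((splitGap u).map (fun b => Ek k (decr b)))
        ((splitGap v).map (fun b => Ek k (decr b))) := hR
    have H := sublistForall₂_of_map hR' rfl rfl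
    have H2 : List.SublistForall₂ (EmbF 0) (splitGap u) (splitGap v) := by
      refine sublistForall₂_mono_mem H ?_
      intro b hb b' hb' hr
      obtain ⟨hb1, hb2, hb3, hb4⟩ := splitGap_blocks u hz b hb
      obtain ⟨hc1, hc2, hc3, hc4⟩ := splitGap_blocks v hz' b' hb'
      have hdu : ∀ p ∈ decr b, p.2 ≤ k := by
        intro p hp
        rw [decr, List.mem_map] at hp
        obtain ⟨q, hq, rfl⟩ := hp
        have := hu q (hb4 q hq)
        omega
      have hEd : EmbF 0 (decr b) (decr b') :=
        ih (decr b) (decr b') hdu (lastZero_decr hb3) (lastZero_decr hc3) hr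
      exact lift b' b 0 hb2 hb3 hc2 hc3 hEd
    have := EmbF.joinBlocks (fun b hb => by
      obtain ⟨h1, _, h3, _⟩ := splitGap_blocks u hz b hb
      exact ⟨h1, h3⟩) H2
    rwa [splitGap_flatten, splitGap_flatten] at this

/-! ### Extracting an index function from a gap-embedding -/

lemma idx (d : L × ℕ) : ∀ {g : ℕ} {u v : List (L × ℕ)}, EmbF g u v →
    ∃ F : ℕ → ℕ,
      (∀ m, m < u.length → F m < v.length) ∧
      (∀ m, m + 1 < u.length → F m < F (m + 1)) ∧
      (∀ m, m < u.length → (u.getD m d).1 = (v.getD (F m) d).1) ∧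
      (∀ i, 0 < u.length → i < F 0 → g ≤ (v.getD i d).2) ∧
      (∀ m, m + 1 < u.length → ∀ i, F m ≤ i → i < F (m + 1) →
        (u.getD m d).2 ≤ (v.getD i d).2) := by
  intro g u v h
  induction h with
  | nil g v =>
    exact ⟨fun _ => 0, fun m hm => by simp at hm, fun m hm => by simp at hm,
      fun m hm => by simp at hm, fun i h0 => by simp at h0,
      fun m hm => by simp at hm⟩
  | match' g a h h' u v hle hE ih =>
    obtain ⟨F, h1, h2, h3, h4, h5⟩ := ih
    refine ⟨fun m => if m = 0 then 0 else F (m - 1) + 1, ?_, ?_, ?_, ?_, ?_⟩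
    · intro m hm
      rcases Nat.eq_zero_or_pos m with rfl | hmp
      · simp
      · have : m - 1 < u.length := by simp at hm; omega
        have := h1 _ this
        simp only [if_neg (Nat.pos_iff_ne_zero.1 hmp)]
        simp
        omega
    · intro m hm
      rcases Nat.eq_zero_or_pos m with rfl | hmp
      · simp
      · have hmu : m - 1 + 1 < u.length := by simp at hm; omega
        have := h2 _ hmu
        simp only [if_neg (Nat.pos_iff_ne_zero.1 hmp), if_neg (Nat.succ_ne_zero m)]
        have e : m + 1 - 1 = m - 1 + 1 := by omega
        rw [e]
        omega
    · intro m hm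
      rcases Nat.eq_zero_or_pos m with rfl | hmp
      · simp
      · obtain ⟨m', rfl⟩ : ∃ m', m = m' + 1 := ⟨m - 1, by omega⟩
        have hmu : m' < u.length := by simp at hm; omega
        simp only [if_neg (Nat.succ_ne_zero m'), List.getD_cons_succ]
        have e : m' + 1 - 1 = m' := by omega
        rw [e]
        exact h3 m' hmu
    · intro i _ hi
      simp at hi
    · intro m hm i hFi hiF
      simp only at hFi hiF
      rcases Nat.eq_zero_or_pos m with rfl | hmp
      · simp only [if_neg (Nat.succ_ne_zero 0), Nat.add_sub_cancel] at hiF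
        simp only [List.getD_cons_zero]
        rcases Nat.eq_zero_or_pos i with rfl | hip
        · simpa using hle
        · obtain ⟨i', rfl⟩ : ∃ i', i = i' + 1 := ⟨i - 1, by omega⟩
          simp only [List.getD_cons_succ]
          have h0u : 0 < u.length := by simp at hm; omega
          exact h4 i' h0u (by omega)
      · obtain ⟨m', rfl⟩ : ∃ m', m = m' + 1 := ⟨m - 1, by omega⟩
        simp only [if_neg (Nat.succ_ne_zero m'), if_neg (Nat.succ_ne_zero (m'+1))] at hFi hiF
        have e : m' + 1 - 1 = m' := by omega
        have e2 : m' + 1 + 1 - 1 = m' + 1 := by omega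
        rw [e] at hFi
        rw [e2] at hiF
        obtain ⟨i', rfl⟩ : ∃ i', i = i' + 1 := ⟨i - 1, by omega⟩
        simp only [List.getD_cons_succ]
        have hmu : m' + 1 < u.length := by simp at hm; omega
        exact h5 m' hmu i' (by omega) (by omega)
  | skip g p u v hgp hE ih =>
    obtain ⟨F, h1, h2, h3, h4, h5⟩ := ih
    refine ⟨fun m => F m + 1, ?_, ?_, ?_, ?_, ?_⟩
    · intro m hm
      have := h1 m hm
      simp
      omega
    · intro m hm
      have := h2 m hm
      simp only
      omega
    · intro m hm
      simp only [List.getD_cons_succ]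
      exact h3 m hm
    · intro i h0 hi
      simp only at hi
      rcases Nat.eq_zero_or_pos i with rfl | hip
      · simpa using hgp
      · obtain ⟨i', rfl⟩ : ∃ i', i = i' + 1 := ⟨i - 1, by omega⟩
        simp only [List.getD_cons_succ]
        exact h4 i' h0 (by omega)
    · intro m hm i hFi hiF
      simp only at hFi hiF
      obtain ⟨i', rfl⟩ : ∃ i', i = i' + 1 := ⟨i - 1, by omega⟩
      simp only [List.getD_cons_succ]
      exact h5 m hm i' (by omega) (by omega)

lemma Fmono {F : ℕ → ℕ} {n : ℕ} (h : ∀ m, m + 1 < n → F m < F (m + 1)) :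
    ∀ b a, a < b → b < n → F a < F b := by
  intro b
  induction b with
  | zero => intro a ha _; omega
  | succ b' ih =>
    intro a ha hbn
    rcases eq_or_lt_of_le (Nat.lt_succ_iff.mp ha) with rfl | hlt
    · exact h a hbn
    · exact (ih a hlt (by omega)).trans (h b' hbn)

end Machinery

/-! ### From codewords to gapped words, and the main theorem -/

def toList {L : Type} {c : ℕ} (w : Codeword L c) : List (L × ℕ) :=
  (List.range w.n).map (fun k => (w.lab (k+1), if k + 1 < w.n then w.gap (k+1) else 0))

lemma toList_length {L : Type} {c : ℕ} (w : Codeword L c) : (toList w).length = w.n := by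
  simp [toList]

lemma toList_getD {L : Type} {c : ℕ} (w : Codeword L c) (d : L × ℕ) {k : ℕ} (hk : k < w.n) :
    (toList w).getD k d = (w.lab (k+1), if k + 1 < w.n then w.gap (k+1) else 0) := by
  rw [List.getD_eq_getElem _ _ (by simpa [toList_length] using hk)]
  simp [toList]

lemma toList_gap_le {L : Type} {c : ℕ} (w : Codeword L c) : ∀ p ∈ toList w, p.2 ≤ c := by
  intro p hp
  simp only [toList, List.mem_map, List.mem_range] at hp
  obtain ⟨k, _, rfl⟩ := hp
  dsimp only
  split
  · exact w.gap_le _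
  · exact Nat.zero_le _

lemma toList_lastZero {L : Type} {c : ℕ} (w : Codeword L c) : LastZero (toList w) := by
  intro p hp
  rw [List.getLast?_eq_getElem?] at hp
  have hlen : (toList w).length = w.n := toList_length w
  have hpos : 0 < (toList w).length := by rw [hlen]; exact w.pos
  have hn : (toList w).length - 1 < (toList w).length := by omega
  rw [List.getElem?_eq_getElem hn] at hp
  simp only [Option.mem_def, Option.some.injEq] at hp
  subst hp
  have : (toList w).length - 1 < w.n := by omega
  simp only [toList, List.getElem_map, List.getElem_range]
  have hne : ¬ ((toList w).length - 1 + 1 < w.n) := by omega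
  simp [hne]
  intro h
  omega

/-- For a finite label set `L` and nonnegative integer `c`, the set of
`(L,c)`-codewords with the domination order is a well-quasi-ordering. -/
theorem stmt2 (L : Type) [Finite L] (c : ℕ) :
    ∀ x : ℕ → Codeword L c, ∃ i j, i < j ∧ Dominates (x i) (x j) := by
  intro x
  cases isEmpty_or_nonempty L with
  | inl hL => exact (hL.false ((x 0).lab 0)).elim
  | inr hL =>
    obtain ⟨l0⟩ := hL
    obtain ⟨_, _, hpwo⟩ := wqoRk L c
    obtain ⟨i, j, hij, hR⟩ := (Set.partiallyWellOrderedOn_iff_exists_lt.1 hpwo) (fun i => Ek c (toList (x i))) (fun _ => Set.mem_univ _)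
    refine ⟨i, j, hij, ?_⟩
    have hE : EmbF 0 (toList (x i)) (toList (x j)) :=
      main_correct c _ _ (toList_gap_le _) (toList_lastZero _) (toList_lastZero _) hR
    obtain ⟨F, h1, h2, h3, h4, h5⟩ := idx (l0, 0) hE
    set u := toList (x i) with hu
    set v := toList (x j) with hv
    have hul : u.length = (x i).n := toList_length _
    have hvl : v.length = (x j).n := toList_length _
    refine ⟨fun m => F (m - 1) + 1, ?_, ?_, ?_, ?_⟩
    · intro m hm1 hmn
      have hml : m - 1 < u.length := by omega
      have := h1 _ hml
      refine ⟨?_, ?_⟩ <;> simp only <;> omega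
    · intro a b ha hab hbn
      have : F (a - 1) < F (b - 1) := Fmono h2 (b - 1) (a - 1) (by omega) (by omega)
      simp only
      omega
    · intro m hm1 hmn
      have em : m - 1 + 1 = m := by omega
      have hmu : m - 1 < u.length := by omega
      have hmv : F (m - 1) < v.length := h1 _ hmu
      have e1 := toList_getD (x i) (l0, 0) (k := m - 1) (by omega)
      have e2 := toList_getD (x j) (l0, 0) (k := F (m - 1)) (by omega)
      rw [← hu] at e1
      rw [← hv] at e2
      have h3' := h3 (m - 1) hmu
      rw [e1, e2] at h3'
      simp only at h3'
      rw [em] at h3'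
      exact h3'
    · intro m hm1 hmn ii hFi hiF
      simp only at hFi hiF
      simp only [Nat.add_sub_cancel] at hiF
      have em : m - 1 + 1 = m := by omega
      have hmu : m - 1 + 1 < u.length := by omega
      have hiF' : ii ≤ F m := by omega
      have hFmv : F m < v.length := by
        have := h1 m (by omega)
        exact this
      have hii1 : 1 ≤ ii := by omega
      have h5' := h5 (m - 1) hmu (ii - 1) (by omega) (by rw [em]; omega)
      have e1 := toList_getD (x i) (l0, 0) (k := m - 1) (by omega)
      have e2 := toList_getD (x j) (l0, 0) (k := ii - 1) (by omega)
      rw [← hu] at e1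
      rw [← hv] at e2
      rw [e1, e2] at h5'
      simp only at h5'
      rw [em] at h5'
      have eii : ii - 1 + 1 = ii := by omega
      rw [eii] at h5'
      rw [if_pos (by omega : m < (x i).n), if_pos (by omega : ii < (x j).n)] at h5'
      exact h5'
end

section
/- The family of oriented cycles {C_{2k} : k ≥ 2}, where C_{2k} is obtained from the undirected cycle on 2k vertices by orienting the edges alternately clockwise and counter-clockwise, forms an infinite antichain under the strong immersion relation on digraphs. -/
/-- A (finite) digraph on natural-number vertices. -/
structure Digr where
  verts : Finset ℕ
  arcs : Finset (ℕ × ℕ)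

/-- The list of consecutive arcs of a path given as a list of vertices. -/
def pathArcs (l : List ℕ) : List (ℕ × ℕ) := l.zip l.tail

/-- `l` is a directed path in `D` from `u` to `v` (with at least one arc). -/
def IsDipath (D : Digr) (l : List ℕ) (u v : ℕ) : Prop :=
  l.head? = some u ∧ l.getLast? = some v ∧ 2 ≤ l.length ∧
  ∀ a ∈ pathArcs l, a ∈ D.arcs

/-- A strong immersion of `H` in `D`. -/
structure StrongImmersion (H D : Digr) where
  μv : ℕ → ℕ
  μe : ℕ × ℕ → List ℕ
  inj : ∀ u ∈ H.verts, ∀ v ∈ H.verts, μv u = μv v → u = v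
  mapsTo : ∀ u ∈ H.verts, μv u ∈ D.verts
  path : ∀ e ∈ H.arcs, IsDipath D (μe e) (μv e.1) (μv e.2)
  disj : ∀ e ∈ H.arcs, ∀ f ∈ H.arcs, e ≠ f →
    ∀ a ∈ pathArcs (μe e), a ∉ pathArcs (μe f)
  avoid : ∀ e ∈ H.arcs, ∀ w ∈ H.verts, w ≠ e.1 → w ≠ e.2 → μv w ∉ μe e

/-- `H` can be strongly immersed in `D`. -/
def Immerses (H D : Digr) : Prop := Nonempty (StrongImmersion H D)

/-- A simple digraph is semi-complete if between any two distinct vertices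
at least one arc is present. -/
def SemiComplete (D : Digr) : Prop :=
  (∀ a ∈ D.arcs, a.1 ∈ D.verts ∧ a.2 ∈ D.verts ∧ a.1 ≠ a.2) ∧
  ∀ u ∈ D.verts, ∀ v ∈ D.verts, u ≠ v → (u, v) ∈ D.arcs ∨ (v, u) ∈ D.arcs

/-- A tournament: exactly one arc between any two distinct vertices. -/
def IsTournament (D : Digr) : Prop :=
  (∀ a ∈ D.arcs, a.1 ∈ D.verts ∧ a.2 ∈ D.verts ∧ a.1 ≠ a.2) ∧
  ∀ u ∈ D.verts, ∀ v ∈ D.verts, u ≠ v → ((u, v) ∈ D.arcs ↔ (v, u) ∉ D.arcs)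

/-- A vertex ordering: a bijection from the vertices onto positions `1..n`. -/
def IsOrdering (D : Digr) (π : ℕ → ℕ) : Prop :=
  Set.BijOn π ↑D.verts ↑(Finset.Icc 1 D.verts.card)

/-- The cut at position `i`: feedback arcs from the last vertices to the first `i`. -/
def cutAt (D : Digr) (π : ℕ → ℕ) (i : ℕ) : Finset (ℕ × ℕ) :=
  D.arcs.filter (fun a => π a.2 ≤ i ∧ i < π a.1)

/-- The width of a vertex ordering. -/
def orderWidth (D : Digr) (π : ℕ → ℕ) : ℕ :=
  (Finset.range (D.verts.card + 1)).sup fun i => (cutAt D π i).card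

/-- The ordering has width at most `c`. -/
def WidthLE (D : Digr) (π : ℕ → ℕ) (c : ℕ) : Prop :=
  ∀ i, (cutAt D π i).card ≤ c

/-- The cutwidth of `D` is at most `c`. -/
def CutwidthLE (D : Digr) (c : ℕ) : Prop :=
  ∃ π, IsOrdering D π ∧ WidthLE D π c

/-- The cycle on `2k` vertices with arcs oriented alternately: every even vertex
is a source, sending arcs to both of its neighbours on the cycle. -/
def altCycle (k : ℕ) : Digr where
  verts := Finset.range (2 * k)
  arcs :=
    (Finset.range k).image (fun j => (2 * j, (2 * j + 1) % (2 * k))) ∪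
    (Finset.range k).image (fun j => (2 * j, (2 * j + (2 * k - 1)) % (2 * k)))


lemma mem_altCycle_arcs {l : ℕ} (hl : 1 ≤ l) (a : ℕ × ℕ) :
    a ∈ (altCycle l).arcs ↔
      a.1 % 2 = 0 ∧ a.1 < 2 * l ∧
      (a.2 = a.1 + 1 ∨ (a.1 = 0 ∧ a.2 = 2 * l - 1) ∨ (a.1 ≠ 0 ∧ a.2 + 1 = a.1)) := by
  obtain ⟨x, y⟩ := a
  simp only [altCycle, Finset.mem_union, Finset.mem_image, Finset.mem_range, Prod.mk.injEq]
  constructor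
  · rintro (⟨j, hj, rfl, rfl⟩ | ⟨j, hj, rfl, rfl⟩)
    · rw [Nat.mod_eq_of_lt (show 2 * j + 1 < 2 * l by omega)]; omega
    · rcases Nat.eq_zero_or_pos j with rfl | hj0
      · rw [Nat.mod_eq_of_lt (show 2 * 0 + (2 * l - 1) < 2 * l by omega)]; omega
      · have h1 : 2 * j + (2 * l - 1) = 2 * l + (2 * j - 1) := by omega
        rw [h1, Nat.add_mod_left, Nat.mod_eq_of_lt (show 2 * j - 1 < 2 * l by omega)]; omega
  · rintro ⟨h2, hlt, h | ⟨h0, h⟩ | ⟨h0, h⟩⟩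
    · left
      exact ⟨x / 2, by omega, by omega, by
        rw [Nat.mod_eq_of_lt (show 2 * (x / 2) + 1 < 2 * l by omega)]; omega⟩
    · right
      exact ⟨0, by omega, by omega, by
        rw [Nat.mod_eq_of_lt (show 2 * 0 + (2 * l - 1) < 2 * l by omega)]; omega⟩
    · right; refine ⟨x / 2, by omega, by omega, ?_⟩
      have h1 : 2 * (x / 2) + (2 * l - 1) = 2 * l + (x - 1) := by omega
      rw [h1, Nat.add_mod_left, Nat.mod_eq_of_lt (show x - 1 < 2 * l by omega)]; omega

lemma arc_bounds {l : ℕ} (hl : 1 ≤ l) {a : ℕ × ℕ} (ha : a ∈ (altCycle l).arcs) :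
    a.1 % 2 = 0 ∧ a.2 % 2 = 1 ∧ a.1 < 2 * l ∧ a.2 < 2 * l := by
  rw [mem_altCycle_arcs hl] at ha; omega

lemma dipath_collapse {l : ℕ} (hl : 1 ≤ l) {lst : List ℕ} {u v : ℕ}
    (h : IsDipath (altCycle l) lst u v) :
    lst = [u, v] ∧ (u, v) ∈ (altCycle l).arcs := by
  obtain ⟨h1, h2, h3, h4⟩ := h
  match lst with
  | [] => simp at h3
  | [a] => simp at h3
  | [a, b] =>
    simp only [List.head?] at h1
    have hu : a = u := by exact Option.some.inj h1
    have hv : b = v := by simpa using h2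
    subst hu; subst hv
    refine ⟨rfl, ?_⟩
    exact h4 (a, b) (by simp [pathArcs])
  | a :: b :: c :: t =>
    have hab : (a, b) ∈ (altCycle l).arcs := h4 _ (by simp [pathArcs])
    have hbc : (b, c) ∈ (altCycle l).arcs := h4 _ (by simp [pathArcs])
    have p1 := (arc_bounds hl hab).2.1
    have p2 := (arc_bounds hl hbc).1
    omega

/-- The alternately oriented cycles `C_{2k}`, `k ≥ 2`, form an infinite antichain
under the strong immersion relation. -/
theorem stmt4 (k l : ℕ) (hk : 2 ≤ k) (hl : 2 ≤ l) (hkl : k ≠ l) :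
    ¬ Immerses (altCycle k) (altCycle l) := by
  rintro ⟨imm⟩
  have hk1 : (1:ℕ) ≤ k := by omega
  have hl1 : (1:ℕ) ≤ l := by omega
  have harc : ∀ e ∈ (altCycle k).arcs, (imm.μv e.1, imm.μv e.2) ∈ (altCycle l).arcs :=
    fun e he => (dipath_collapse hl1 (imm.path e he)).2
  have hμe : ∀ e ∈ (altCycle k).arcs, imm.μe e = [imm.μv e.1, imm.μv e.2] :=
    fun e he => (dipath_collapse hl1 (imm.path e he)).1
  have hdist : ∀ e ∈ (altCycle k).arcs, ∀ f ∈ (altCycle k).arcs, e ≠ f →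
      (imm.μv e.1, imm.μv e.2) ≠ (imm.μv f.1, imm.μv f.2) := by
    intro e he f hf hef heq
    have := imm.disj e he f hf hef (imm.μv e.1, imm.μv e.2) (by rw [hμe e he]; simp [pathArcs])
    rw [hμe f hf] at this
    simp only [pathArcs] at this
    exact this (by simp [heq])
  set S : Finset ℕ := (Finset.range (2*k)).image imm.μv with hS
  have hmaps : ∀ v < 2*k, imm.μv v < 2*l := by
    intro v hv
    have := imm.mapsTo v (by simpa [altCycle] using hv)
    simpa [altCycle] using this
  have hmemS : ∀ v < 2*k, imm.μv v ∈ S := by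
    intro v hv
    simp only [hS, Finset.mem_image, Finset.mem_range]
    exact ⟨v, hv, rfl⟩
  -- closure of S under cyclic successor
  have hclose : ∀ x ∈ S, (x + 1) % (2*l) ∈ S := by
    intro x hx
    simp only [hS, Finset.mem_image, Finset.mem_range] at hx
    obtain ⟨v, hv, rfl⟩ := hx
    by_cases hp : v % 2 = 0
    · -- v is a source in altCycle k
      set w : ℕ := if v = 0 then 2*k - 1 else v - 1 with hw
      have he : ((v, v+1) : ℕ × ℕ) ∈ (altCycle k).arcs := by
        rw [mem_altCycle_arcs hk1]; exact ⟨hp, hv, Or.inl rfl⟩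
      have hf : ((v, w) : ℕ × ℕ) ∈ (altCycle k).arcs := by
        rw [mem_altCycle_arcs hk1, hw]
        split_ifs with h0
        · exact ⟨hp, hv, Or.inr (Or.inl ⟨h0, rfl⟩)⟩
        · exact ⟨hp, hv, Or.inr (Or.inr ⟨h0, by omega⟩)⟩
      have hef : ((v, v+1) : ℕ × ℕ) ≠ (v, w) := by
        rw [hw]; split_ifs with h0 <;> simp only [ne_eq, Prod.mk.injEq] <;> omega
      have hA : (imm.μv v) % 2 = 0 ∧ imm.μv v < 2*l ∧
          (imm.μv (v+1) = imm.μv v + 1 ∨ (imm.μv v = 0 ∧ imm.μv (v+1) = 2*l - 1) ∨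
            (imm.μv v ≠ 0 ∧ imm.μv (v+1) + 1 = imm.μv v)) := by
        have := harc _ he; rw [mem_altCycle_arcs hl1] at this; exact this
      have hB : (imm.μv v) % 2 = 0 ∧ imm.μv v < 2*l ∧
          (imm.μv w = imm.μv v + 1 ∨ (imm.μv v = 0 ∧ imm.μv w = 2*l - 1) ∨
            (imm.μv v ≠ 0 ∧ imm.μv w + 1 = imm.μv v)) := by
        have := harc _ hf; rw [mem_altCycle_arcs hl1] at this; exact this
      have hcd : imm.μv (v+1) ≠ imm.μv w := by
        intro h
        exact hdist _ he _ hf hef (by simp only [h])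
      obtain ⟨hm2, hmlt, hA3⟩ := hA
      obtain ⟨-, -, hB3⟩ := hB
      rw [Nat.mod_eq_of_lt (show imm.μv v + 1 < 2*l by omega)]
      have hkey : imm.μv (v+1) = imm.μv v + 1 ∨ imm.μv w = imm.μv v + 1 := by omega
      rcases hkey with h | h
      · rw [← h]; exact hmemS (v+1) (by omega)
      · rw [← h]; refine hmemS w ?_
        rw [hw]; split_ifs <;> omega
    · -- v is a sink in altCycle k
      set w : ℕ := if v = 2*k - 1 then 0 else v + 1 with hw
      have he : ((v-1, v) : ℕ × ℕ) ∈ (altCycle k).arcs := by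
        rw [mem_altCycle_arcs hk1]; exact ⟨by omega, by omega, Or.inl (by omega)⟩
      have hf : ((w, v) : ℕ × ℕ) ∈ (altCycle k).arcs := by
        rw [mem_altCycle_arcs hk1, hw]
        split_ifs with h0
        · exact ⟨by omega, by omega, Or.inr (Or.inl ⟨rfl, by omega⟩)⟩
        · exact ⟨by omega, by omega, Or.inr (Or.inr ⟨by omega, by omega⟩)⟩
      have hef : ((v-1, v) : ℕ × ℕ) ≠ (w, v) := by
        rw [hw]; split_ifs with h0 <;> simp only [ne_eq, Prod.mk.injEq] <;> omega
      have hA : (imm.μv (v-1)) % 2 = 0 ∧ imm.μv (v-1) < 2*l ∧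
          (imm.μv v = imm.μv (v-1) + 1 ∨ (imm.μv (v-1) = 0 ∧ imm.μv v = 2*l - 1) ∨
            (imm.μv (v-1) ≠ 0 ∧ imm.μv v + 1 = imm.μv (v-1))) := by
        have := harc _ he; rw [mem_altCycle_arcs hl1] at this; exact this
      have hB : (imm.μv w) % 2 = 0 ∧ imm.μv w < 2*l ∧
          (imm.μv v = imm.μv w + 1 ∨ (imm.μv w = 0 ∧ imm.μv v = 2*l - 1) ∨
            (imm.μv w ≠ 0 ∧ imm.μv v + 1 = imm.μv w)) := by
        have := harc _ hf; rw [mem_altCycle_arcs hl1] at this; exact this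
      have hmlt : imm.μv v < 2*l := hmaps v hv
      have hcd : imm.μv (v-1) ≠ imm.μv w := by
        intro h
        exact hdist _ he _ hf hef (by simp only [h])
      obtain ⟨ht2, htlt, hA3⟩ := hA
      obtain ⟨ht2', htlt', hB3⟩ := hB
      have hwmem : w < 2*k := by
        rw [hw]; split_ifs <;> omega
      by_cases hme : imm.μv v = 2*l - 1
      · rw [show imm.μv v + 1 = 2*l by omega, Nat.mod_self]
        have hkey : imm.μv (v-1) = 0 ∨ imm.μv w = 0 := by omega
        rcases hkey with h | h
        · rw [← h]; exact hmemS (v-1) (by omega)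
        · rw [← h]; exact hmemS w hwmem
      · rw [Nat.mod_eq_of_lt (show imm.μv v + 1 < 2*l by omega)]
        have hkey : imm.μv (v-1) = imm.μv v + 1 ∨ imm.μv w = imm.μv v + 1 := by omega
        rcases hkey with h | h
        · rw [← h]; exact hmemS (v-1) (by omega)
        · rw [← h]; exact hmemS w hwmem
  -- S is all of range (2*l)
  have hsub : S ⊆ Finset.range (2*l) := by
    intro x hx
    simp only [hS, Finset.mem_image, Finset.mem_range] at hx ⊢
    obtain ⟨v, hv, rfl⟩ := hx
    exact hmaps v hv
  have hx0 : imm.μv 0 < 2*l := hmaps 0 (by omega)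
  have hiter : ∀ t, (imm.μv 0 + t) % (2*l) ∈ S := by
    intro t
    induction t with
    | zero => rw [Nat.add_zero, Nat.mod_eq_of_lt hx0]; exact hmemS 0 (by omega)
    | succ t ih =>
      have h1 := hclose _ ih
      have heq : ((imm.μv 0 + t) % (2*l) + 1) % (2*l) = (imm.μv 0 + (t+1)) % (2*l) := by
        conv_rhs => rw [show imm.μv 0 + (t+1) = (imm.μv 0 + t) + 1 by omega, Nat.add_mod,
          Nat.mod_eq_of_lt (show (1:ℕ) < 2*l by omega)]
      rwa [heq] at h1
  have hsup : Finset.range (2*l) ⊆ S := by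
    intro y hy
    rw [Finset.mem_range] at hy
    rcases le_or_gt (imm.μv 0) y with hle | hlt
    · have := hiter (y - imm.μv 0)
      rwa [show imm.μv 0 + (y - imm.μv 0) = y by omega, Nat.mod_eq_of_lt hy] at this
    · have := hiter (y + 2*l - imm.μv 0)
      rwa [show imm.μv 0 + (y + 2*l - imm.μv 0) = y + 2*l by omega, Nat.add_mod_right,
        Nat.mod_eq_of_lt hy] at this
  have hSeq : S = Finset.range (2*l) := Finset.Subset.antisymm hsub hsup
  have hinj : Set.InjOn imm.μv ↑(Finset.range (2*k)) := fun u hu v hv h =>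
    imm.inj u (Finset.mem_coe.mp hu) v (Finset.mem_coe.mp hv) h
  have hcard : S.card = 2*k := by
    rw [hS, Finset.card_image_of_injOn hinj, Finset.card_range]
  rw [hSeq, Finset.card_range] at hcard
  omega
end
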